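/- Let Ω(t) solve Ω̇(t) = -λΩ(t) + λ φ(t)φᵀ(t)/(1 + φᵀ(t)φ(t)), Ω(t₀) = Ω₀ ≥ 0, with λ > 0. If φ is finitely exciting on [t₁, t₂] with level α, i.e. ∫_{t₁}^{t₂} φ(τ)φᵀ(τ) dτ ≥ αI, and d = max_{τ∈[t₁,t₂]}(1 + ‖φ(τ)‖²), then Ω(t₂) ≥ (λα/d) e^{-λ(t₂ - t₁)} I. -/

import Mathlib

open RealInnerProductSpace
open scoped Matrix

/-- Lemma 6, part 3 (core estimate): finite excitation of the regressor over [t₁, t₂]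
gives a positive definite lower bound Ω(t₂) ≥ (λα/d)e^{-λ(t₂-t₁)} I. -/
theorem Omega_FE_lower_bound {N : ℕ} (t₀ t₁ t₂ lam α d : ℝ)
    (hlam : 0 < lam) (hα : 0 < α) (ht₀ : t₀ ≤ t₁) (ht₁ : t₁ < t₂)
    (φ : ℝ → EuclideanSpace ℝ (Fin N)) (hφ : Continuous φ)
    (Ω₀ : Matrix (Fin N) (Fin N) ℝ) (hΩ₀ : Ω₀.PosSemidef)
    (Ω : ℝ → Matrix (Fin N) (Fin N) ℝ)
    (hΩ : ∀ t, ∀ i j, Ω t i j =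
      Real.exp (-lam * (t - t₀)) * Ω₀ i j +
        ∫ τ in t₀..t, Real.exp (-lam * (t - τ)) * lam * (φ τ i * φ τ j) / (1 + ‖φ τ‖^2))
    (hFE : ∀ v : EuclideanSpace ℝ (Fin N),
      α * ‖v‖^2 ≤ ∫ τ in t₁..t₂, (⟪φ τ, v⟫ : ℝ)^2)
    (hd : ∀ τ ∈ Set.Icc t₁ t₂, 1 + ‖φ τ‖^2 ≤ d) :
    (Ω t₂ - (lam * α / d * Real.exp (-lam * (t₂ - t₁))) •
        (1 : Matrix (Fin N) (Fin N) ℝ)).PosSemidef := by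
  have hD : ∀ τ, (0:ℝ) < 1 + ‖φ τ‖^2 := fun τ => by positivity
  have hdpos : (0:ℝ) < d := lt_of_lt_of_le (hD t₁) (hd t₁ ⟨le_refl _, ht₁.le⟩)
  -- coordinate functions of φ are continuous
  have hφi : ∀ i : Fin N, Continuous (fun τ => φ τ i) := fun i =>
    (continuous_apply i).comp ((PiLp.continuous_ofLp ..).comp hφ)
  have hcont : ∀ i j : Fin N, Continuous (fun τ =>
      Real.exp (-lam * (t₂ - τ)) * lam * (φ τ i * φ τ j) / (1 + ‖φ τ‖^2)) := by
    intro i j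
    apply Continuous.div
    · exact ((Real.continuous_exp.comp (by continuity)).mul continuous_const).mul
        ((hφi i).mul (hφi j))
    · exact continuous_const.add (hφ.norm.pow 2)
    · exact fun τ => (hD τ).ne'
  have hint : ∀ (i j : Fin N) (a b : ℝ), IntervalIntegrable (fun τ =>
      Real.exp (-lam * (t₂ - τ)) * lam * (φ τ i * φ τ j) / (1 + ‖φ τ‖^2))
      MeasureTheory.volume a b := fun i j a b => (hcont i j).intervalIntegrable a b
  rw [Matrix.posSemidef_iff_dotProduct_mulVec]
  constructor
  · -- Hermitian
    apply Matrix.IsHermitian.sub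
    · show (Ω t₂).conjTranspose = Ω t₂
      ext i j
      simp only [Matrix.conjTranspose_apply, star_trivial, hΩ]
      congr 1
      · rw [show Ω₀ j i = Ω₀ i j by
          have := hΩ₀.1.apply i j
          simpa using this]
      · apply intervalIntegral.integral_congr
        intro τ _
        ring
    · show ((lam * α / d * Real.exp (-lam * (t₂ - t₁))) • (1 : Matrix (Fin N) (Fin N) ℝ)).conjTranspose = _
      rw [Matrix.conjTranspose_smul, Matrix.conjTranspose_one, star_trivial]
  · intro x
    -- regard x as a Euclidean vector
    set v : EuclideanSpace ℝ (Fin N) := WithLp.toLp 2 x with hv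
    have hip : ∀ τ, (⟪φ τ, v⟫ : ℝ) = ∑ i, φ τ i * x i := fun τ => by
      simp [PiLp.inner_apply, RCLike.inner_apply, hv, mul_comm]
    set g : ℝ → ℝ := fun τ =>
      Real.exp (-lam * (t₂ - τ)) * lam * (⟪φ τ, v⟫ : ℝ)^2 / (1 + ‖φ τ‖^2) with hg
    have hginner : Continuous fun τ => (⟪φ τ, v⟫ : ℝ) := hφ.inner continuous_const
    have hgcont : Continuous g := by
      apply Continuous.div
      · exact ((Real.continuous_exp.comp (by continuity)).mul continuous_const).mul
          (hginner.pow 2)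
      · exact continuous_const.add (hφ.norm.pow 2)
      · exact fun τ => (hD τ).ne'
    have hgint : ∀ a b : ℝ, IntervalIntegrable g MeasureTheory.volume a b :=
      fun a b => hgcont.intervalIntegrable a b
    have hgnonneg : ∀ τ, 0 ≤ g τ := fun τ => by
      apply div_nonneg _ (hD τ).le
      have := (Real.exp_pos (-lam * (t₂ - τ))).le
      positivity
    -- main expansion of the quadratic form
    have key : x ⬝ᵥ (Ω t₂ *ᵥ x) =
        Real.exp (-lam * (t₂ - t₀)) * (x ⬝ᵥ (Ω₀ *ᵥ x)) + ∫ τ in t₀..t₂, g τ := by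
      simp only [Matrix.mulVec, dotProduct, hΩ, add_mul, Finset.sum_add_distrib,
        Finset.mul_sum, mul_add]
      congr 1
      · exact Finset.sum_congr rfl fun i _ => Finset.sum_congr rfl fun j _ => by ring
      · have h2 : ∀ i j : Fin N, x i * ((∫ τ in t₀..t₂,
            Real.exp (-lam * (t₂ - τ)) * lam * (φ τ i * φ τ j) / (1 + ‖φ τ‖^2)) * x j)
            = ∫ τ in t₀..t₂, x i *
                (Real.exp (-lam * (t₂ - τ)) * lam * (φ τ i * φ τ j) / (1 + ‖φ τ‖^2) * x j) := by
          intro i j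
          rw [← intervalIntegral.integral_mul_const, ← intervalIntegral.integral_const_mul]
        simp only [h2]
        have swap2 : ∀ i : Fin N, (∑ j, ∫ τ in t₀..t₂, x i *
            (Real.exp (-lam * (t₂ - τ)) * lam * (φ τ i * φ τ j) / (1 + ‖φ τ‖^2) * x j))
            = ∫ τ in t₀..t₂, ∑ j, x i *
              (Real.exp (-lam * (t₂ - τ)) * lam * (φ τ i * φ τ j) / (1 + ‖φ τ‖^2) * x j) := by
          intro i
          rw [← intervalIntegral.integral_finset_sum]
          intro j _
          exact (((hint i j t₀ t₂).mul_const (x j)).const_mul (x i))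
        simp only [swap2]
        rw [← intervalIntegral.integral_finset_sum]
        swap
        · intro i _
          exact (continuous_finset_sum _ fun j _ =>
            (continuous_const.mul ((hcont i j).mul continuous_const))).intervalIntegrable _ _
        apply intervalIntegral.integral_congr
        intro τ _
        simp only [hg, hip]
        calc ∑ i, ∑ j, x i *
                (Real.exp (-lam * (t₂ - τ)) * lam * (φ τ i * φ τ j) / (1 + ‖φ τ‖^2) * x j)
              = ∑ i, ∑ j, (Real.exp (-lam * (t₂ - τ)) * lam / (1 + ‖φ τ‖^2)) *
                  ((φ τ i * x i) * (φ τ j * x j)) := by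
                refine Finset.sum_congr rfl fun i _ => Finset.sum_congr rfl fun j _ => by ring
            _ = (Real.exp (-lam * (t₂ - τ)) * lam / (1 + ‖φ τ‖^2)) *
                  ((∑ i, φ τ i * x i) * (∑ j, φ τ j * x j)) := by
                rw [Finset.sum_mul_sum]
                simp only [Finset.mul_sum]
            _ = Real.exp (-lam * (t₂ - τ)) * lam * (∑ i, φ τ i * x i)^2 / (1 + ‖φ τ‖^2) := by
                ring
    -- lower bound for the integral
    have hsplit : (∫ τ in t₀..t₂, g τ) =
        (∫ τ in t₀..t₁, g τ) + ∫ τ in t₁..t₂, g τ :=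
      (intervalIntegral.integral_add_adjacent_intervals (hgint t₀ t₁) (hgint t₁ t₂)).symm
    have h01 : 0 ≤ ∫ τ in t₀..t₁, g τ :=
      intervalIntegral.integral_nonneg ht₀ (fun τ _ => hgnonneg τ)
    have hipint : IntervalIntegrable (fun τ => (⟪φ τ, v⟫ : ℝ)^2) MeasureTheory.volume t₁ t₂ :=
      ((hginner.pow 2)).intervalIntegrable t₁ t₂
    have hmono : (∫ τ in t₁..t₂, (lam * Real.exp (-lam * (t₂ - t₁)) / d) * (⟪φ τ, v⟫ : ℝ)^2)
        ≤ ∫ τ in t₁..t₂, g τ := by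
      apply intervalIntegral.integral_mono_on ht₁.le (hipint.const_mul _) (hgint t₁ t₂)
      intro τ hτ
      have hE : Real.exp (-lam * (t₂ - t₁)) ≤ Real.exp (-lam * (t₂ - τ)) := by
        apply Real.exp_le_exp.mpr
        nlinarith [hτ.1]
      have hDd : 1 + ‖φ τ‖^2 ≤ d := hd τ hτ
      have hs : (0:ℝ) ≤ (⟪φ τ, v⟫ : ℝ)^2 := sq_nonneg _
      calc lam * Real.exp (-lam * (t₂ - t₁)) / d * (⟪φ τ, v⟫ : ℝ)^2
          = Real.exp (-lam * (t₂ - t₁)) * lam * (⟪φ τ, v⟫ : ℝ)^2 / d := by ring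
        _ ≤ Real.exp (-lam * (t₂ - τ)) * lam * (⟪φ τ, v⟫ : ℝ)^2 / (1 + ‖φ τ‖^2) := by
            apply div_le_div₀
            · positivity
            · have : Real.exp (-lam * (t₂ - t₁)) * lam ≤ Real.exp (-lam * (t₂ - τ)) * lam :=
                mul_le_mul_of_nonneg_right hE hlam.le
              exact mul_le_mul_of_nonneg_right this hs
            · exact hD τ
            · exact hDd
    have hconst : (∫ τ in t₁..t₂, (lam * Real.exp (-lam * (t₂ - t₁)) / d) * (⟪φ τ, v⟫ : ℝ)^2)
        = (lam * Real.exp (-lam * (t₂ - t₁)) / d) * ∫ τ in t₁..t₂, (⟪φ τ, v⟫ : ℝ)^2 :=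
      intervalIntegral.integral_const_mul _ _
    have hcnn : (0:ℝ) ≤ lam * Real.exp (-lam * (t₂ - t₁)) / d := by positivity
    have hFEv := hFE v
    have hlb : (lam * α / d * Real.exp (-lam * (t₂ - t₁))) * ‖v‖^2 ≤ ∫ τ in t₁..t₂, g τ := by
      calc (lam * α / d * Real.exp (-lam * (t₂ - t₁))) * ‖v‖^2
          = (lam * Real.exp (-lam * (t₂ - t₁)) / d) * (α * ‖v‖^2) := by ring
        _ ≤ (lam * Real.exp (-lam * (t₂ - t₁)) / d) * ∫ τ in t₁..t₂, (⟪φ τ, v⟫ : ℝ)^2 :=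
            mul_le_mul_of_nonneg_left hFEv hcnn
        _ = ∫ τ in t₁..t₂, (lam * Real.exp (-lam * (t₂ - t₁)) / d) * (⟪φ τ, v⟫ : ℝ)^2 :=
            hconst.symm
        _ ≤ ∫ τ in t₁..t₂, g τ := hmono
    have hΩ₀nn : 0 ≤ x ⬝ᵥ (Ω₀ *ᵥ x) := by
      have := hΩ₀.dotProduct_mulVec_nonneg x
      simpa using this
    have hxx : x ⬝ᵥ x = ‖v‖^2 := by
      rw [← real_inner_self_eq_norm_sq]
      simp [PiLp.inner_apply, RCLike.inner_apply, hv, dotProduct]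
      rw [EuclideanSpace.norm_sq_eq]
      simp [sq]
    -- finish
    have hquad : (lam * α / d * Real.exp (-lam * (t₂ - t₁))) * ‖v‖^2 ≤ x ⬝ᵥ (Ω t₂ *ᵥ x) := by
      rw [key, hsplit]
      have : 0 ≤ Real.exp (-lam * (t₂ - t₀)) * (x ⬝ᵥ (Ω₀ *ᵥ x)) := by
        have := (Real.exp_pos (-lam * (t₂ - t₀))).le
        positivity
      linarith
    simp only [star_trivial, Matrix.sub_mulVec, dotProduct_sub,
      Matrix.smul_mulVec, Matrix.one_mulVec, dotProduct_smul, smul_eq_mul, hxx]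
    linarith
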